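/- arXiv:0906.5247 — 3 statements merged into one kernel-verified Lean document; each statement's English description precedes it below -/
import Mathlib

section
/- Let G = G₁G₂ = G₂G₁ be a matched pair of subgroupoids with both factorizations, and define φ(g) = p₁(g)⁻¹ p₂'(g). Then φ is an involution: φ(φ(g)) = g for every g ∈ G. -/
/-- A groupoid presented algebraically: a set of arrows with source `s`, range `r`,
a (total) multiplication which is only meaningful on composable pairs (`s x = r y`),
and inversion. Units are the elements in the range of `s`. -/
structure PreGroupoid (G : Type*) where
  s : G → G
  r : G → G
  mul : G → G → G
  inv : G → G
  s_s : ∀ x, s (s x) = s x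
  r_s : ∀ x, r (s x) = s x
  s_r : ∀ x, s (r x) = r x
  r_r : ∀ x, r (r x) = r x
  r_mul : ∀ x y, s x = r y → r (mul x y) = r x
  s_mul : ∀ x y, s x = r y → s (mul x y) = s y
  mul_assoc' : ∀ x y z, s x = r y → s y = r z → mul (mul x y) z = mul x (mul y z)
  id_left : ∀ x, mul (r x) x = x
  id_right : ∀ x, mul x (s x) = x
  s_inv : ∀ x, s (inv x) = r x
  r_inv : ∀ x, r (inv x) = s x
  inv_mul : ∀ x, mul (inv x) x = s x
  mul_inv : ∀ x, mul x (inv x) = r x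

namespace PreGroupoid

variable {G : Type*}

/-- The set of units `G⁰` of the groupoid. -/
def units (Gp : PreGroupoid G) : Set G := Set.range Gp.s

/-- A subgroupoid: contains all units, closed under composable products and inverses. -/
structure IsSubgroupoid (Gp : PreGroupoid G) (S : Set G) : Prop where
  unit_mem : ∀ x, Gp.s x ∈ S
  mul_mem : ∀ {x y}, x ∈ S → y ∈ S → Gp.s x = Gp.r y → Gp.mul x y ∈ S
  inv_mem : ∀ {x}, x ∈ S → Gp.inv x ∈ S

/-- `p₁, p₂` factor every element of `G` as a composable product `g = p₁(g) p₂(g)`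
with `p₁(g) ∈ G₁` and `p₂(g) ∈ G₂`. -/
def IsFactorization (Gp : PreGroupoid G) (G₁ G₂ : Set G) (p₁ p₂ : G → G) : Prop :=
  ∀ g, p₁ g ∈ G₁ ∧ p₂ g ∈ G₂ ∧ Gp.s (p₁ g) = Gp.r (p₂ g) ∧ Gp.mul (p₁ g) (p₂ g) = g

/-- Uniqueness of composable factorizations with first factor in `G₁`, second in `G₂`. -/
def UniqueFactorization (Gp : PreGroupoid G) (G₁ G₂ : Set G) : Prop :=
  ∀ g₁ g₂ h₁ h₂, g₁ ∈ G₁ → g₂ ∈ G₂ → h₁ ∈ G₁ → h₂ ∈ G₂ →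
    Gp.s g₁ = Gp.r g₂ → Gp.s h₁ = Gp.r h₂ →
    Gp.mul g₁ g₂ = Gp.mul h₁ h₂ → g₁ = h₁ ∧ g₂ = h₂

end PreGroupoid


namespace PreGroupoid

variable {G : Type*}

theorem inv_inv' (Gp : PreGroupoid G) (x : G) : Gp.inv (Gp.inv x) = x := by
  have h1 : Gp.s (Gp.inv (Gp.inv x)) = Gp.r (Gp.inv x) := Gp.s_inv _
  have h2 : Gp.s (Gp.inv x) = Gp.r x := Gp.s_inv _
  calc Gp.inv (Gp.inv x)
      = Gp.mul (Gp.inv (Gp.inv x)) (Gp.s (Gp.inv (Gp.inv x))) := (Gp.id_right _).symm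
    _ = Gp.mul (Gp.inv (Gp.inv x)) (Gp.mul (Gp.inv x) x) := by
        rw [h1, Gp.r_inv, ← Gp.inv_mul]
    _ = Gp.mul (Gp.mul (Gp.inv (Gp.inv x)) (Gp.inv x)) x := (Gp.mul_assoc' _ _ _ h1 h2).symm
    _ = Gp.mul (Gp.s (Gp.inv x)) x := by rw [Gp.inv_mul]
    _ = x := by rw [h2, Gp.id_left]

/-- Uniqueness of factorizations follows from `G₁ ∩ G₂ = G⁰`. -/
theorem unique_of_inter (Gp : PreGroupoid G) {G₁ G₂ : Set G}
    (h1 : Gp.IsSubgroupoid G₁) (h2 : Gp.IsSubgroupoid G₂)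
    (hinter : G₁ ∩ G₂ = Gp.units) :
    Gp.UniqueFactorization G₁ G₂ := by
  intro g₁ g₂ h₁ h₂ hg₁ hg₂ hh₁ hh₂ hc hc' heq
  have hr : Gp.r g₁ = Gp.r h₁ := by
    have := congrArg Gp.r heq
    rwa [Gp.r_mul _ _ hc, Gp.r_mul _ _ hc'] at this
  have hs : Gp.s g₂ = Gp.s h₂ := by
    have := congrArg Gp.s heq
    rwa [Gp.s_mul _ _ hc, Gp.s_mul _ _ hc'] at this
  -- u = h₁⁻¹ g₁
  set u := Gp.mul (Gp.inv h₁) g₁ with hu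
  have hcu : Gp.s (Gp.inv h₁) = Gp.r g₁ := by rw [Gp.s_inv, hr]
  have hu1 : u ∈ G₁ := h1.mul_mem (h1.inv_mem hh₁) hg₁ hcu
  -- u = h₂ g₂⁻¹ as well
  have hcv : Gp.s h₂ = Gp.r (Gp.inv g₂) := by rw [Gp.r_inv, hs]
  have key : u = Gp.mul h₂ (Gp.inv g₂) := by
    have e1 : Gp.mul (Gp.mul (Gp.inv h₁) (Gp.mul g₁ g₂)) (Gp.inv g₂)
        = Gp.mul (Gp.mul (Gp.inv h₁) (Gp.mul h₁ h₂)) (Gp.inv g₂) := by rw [heq]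
    have c1 : Gp.s (Gp.inv h₁) = Gp.r (Gp.mul g₁ g₂) := by rw [Gp.r_mul _ _ hc, ← hcu]
    have c2 : Gp.s (Gp.inv h₁) = Gp.r (Gp.mul h₁ h₂) := by rw [Gp.r_mul _ _ hc', Gp.s_inv]
    have c3 : Gp.s (Gp.mul g₁ g₂) = Gp.r (Gp.inv g₂) := by rw [Gp.s_mul _ _ hc, Gp.r_inv]
    have c4 : Gp.s (Gp.mul h₁ h₂) = Gp.r (Gp.inv g₂) := by rw [Gp.s_mul _ _ hc', ← hs, Gp.r_inv]
    -- LHS simplification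
    have l1 : Gp.mul (Gp.mul (Gp.inv h₁) (Gp.mul g₁ g₂)) (Gp.inv g₂)
        = Gp.mul u (Gp.mul g₂ (Gp.inv g₂)) := by
      rw [hu, ← Gp.mul_assoc' _ _ _ hcu hc,
        Gp.mul_assoc' _ _ _ (by rw [Gp.s_mul _ _ hcu, hc]) (Gp.r_inv g₂ ▸ rfl)]
    have l2 : Gp.mul u (Gp.mul g₂ (Gp.inv g₂)) = u := by
      have hsu : Gp.r g₂ = Gp.s u := by rw [hu, Gp.s_mul _ _ hcu, hc]
      rw [Gp.mul_inv, hsu, Gp.id_right]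
    -- RHS simplification
    have r1 : Gp.mul (Gp.mul (Gp.inv h₁) (Gp.mul h₁ h₂)) (Gp.inv g₂)
        = Gp.mul (Gp.mul (Gp.mul (Gp.inv h₁) h₁) h₂) (Gp.inv g₂) := by
      rw [Gp.mul_assoc' _ _ _ (by rw [Gp.s_inv]) hc']
    have r2 : Gp.mul (Gp.mul (Gp.mul (Gp.inv h₁) h₁) h₂) (Gp.inv g₂)
        = Gp.mul h₂ (Gp.inv g₂) := by
      rw [Gp.inv_mul, hc', Gp.id_left]
    rw [l1, l2] at e1
    rw [r1, r2] at e1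
    exact e1
  have hu2 : u ∈ G₂ := key ▸ h2.mul_mem hh₂ (h2.inv_mem hg₂) hcv
  have huu : u ∈ Gp.units := hinter ▸ ⟨hu1, hu2⟩
  obtain ⟨y, hy⟩ := huu
  have hru : Gp.r u = u := by rw [← hy, Gp.r_s]
  -- u = s h₁
  have hus : u = Gp.s h₁ := by rw [← hru, hu, Gp.r_mul _ _ hcu, Gp.r_inv]
  have hg1h1 : g₁ = h₁ := by
    have : Gp.mul h₁ u = g₁ := by
      rw [hu, ← Gp.mul_assoc' _ _ _ (by rw [Gp.r_inv]) hcu, Gp.mul_inv, ← hr, Gp.id_left]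
    rw [← this, hus, Gp.id_right]
  refine ⟨hg1h1, ?_⟩
  -- cancel g₁ on the left
  have e2 : Gp.mul (Gp.inv g₁) (Gp.mul g₁ g₂) = Gp.mul (Gp.inv g₁) (Gp.mul g₁ h₂) := by
    rw [heq, hg1h1]
  have chb : Gp.s g₁ = Gp.r h₂ := by rw [hg1h1, hc']
  have simp1 : ∀ b, Gp.s g₁ = Gp.r b → Gp.mul (Gp.inv g₁) (Gp.mul g₁ b) = b := by
    intro b hb
    rw [← Gp.mul_assoc' _ _ _ (by rw [Gp.s_inv]) hb, Gp.inv_mul, hb, Gp.id_left]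
  rw [simp1 _ hc, simp1 _ chb] at e2
  exact e2

end PreGroupoid

/-- `φ` is an involution: `φ(φ(g)) = g`. -/
theorem stmt5 {G : Type*} (Gp : PreGroupoid G) (G₁ G₂ : Set G)
    (h1 : Gp.IsSubgroupoid G₁) (h2 : Gp.IsSubgroupoid G₂)
    (hinter : G₁ ∩ G₂ = Gp.units)
    (p₁ p₂ p₁' p₂' : G → G)
    (hfact : Gp.IsFactorization G₁ G₂ p₁ p₂)
    (hfact' : Gp.IsFactorization G₂ G₁ p₂' p₁')
    (φ : G → G)
    (hφ : ∀ g, φ g = Gp.mul (Gp.inv (p₁ g)) (p₂' g)) :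
    ∀ g, φ (φ g) = g := by
  intro g
  obtain ⟨ha1, hb2, hab, habg⟩ := hfact g
  obtain ⟨hc2, hd1, hcd, hcdg⟩ := hfact' g
  set a := p₁ g; set b := p₂ g; set c := p₂' g; set d := p₁' g
  have uniq12 := Gp.unique_of_inter h1 h2 hinter
  have uniq21 : Gp.UniqueFactorization G₂ G₁ := by
    apply Gp.unique_of_inter h2 h1
    rw [Set.inter_comm]; exact hinter
  -- basic range/source facts
  have hra : Gp.r a = Gp.r g := by rw [← habg, Gp.r_mul _ _ hab]
  have hrc : Gp.r c = Gp.r g := by rw [← hcdg, Gp.r_mul _ _ hcd]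
  have hsb : Gp.s b = Gp.s g := by rw [← habg, Gp.s_mul _ _ hab]
  have hsd : Gp.s d = Gp.s g := by rw [← hcdg, Gp.s_mul _ _ hcd]
  have hφg : φ g = Gp.mul (Gp.inv a) c := hφ g
  have hcomp1 : Gp.s (Gp.inv a) = Gp.r c := by rw [Gp.s_inv, hra, hrc]
  -- φ g = b * d⁻¹
  have hcomp2 : Gp.s b = Gp.r (Gp.inv d) := by rw [Gp.r_inv, hsb, hsd]
  have hclaim : φ g = Gp.mul b (Gp.inv d) := by
    have e : Gp.mul a (Gp.mul b (Gp.inv d)) = c := by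
      rw [← Gp.mul_assoc' _ _ _ hab hcomp2, habg, ← hcdg,
        Gp.mul_assoc' _ _ _ hcd (by rw [Gp.r_inv]), Gp.mul_inv, ← hcd, Gp.id_right]
    have : Gp.mul (Gp.inv a) (Gp.mul a (Gp.mul b (Gp.inv d))) = Gp.mul b (Gp.inv d) := by
      rw [← Gp.mul_assoc' _ _ _ (Gp.s_inv a) (by rw [Gp.r_mul _ _ hcomp2, ← hab]),
        Gp.inv_mul, hab]
      rw [← Gp.r_mul b (Gp.inv d) hcomp2, Gp.id_left]
    rw [hφg, ← this, e]
  -- factorizations of φ g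
  obtain ⟨hA1, hB2, hAB, hABg⟩ := hfact (φ g)
  obtain ⟨hC2, hD1, hCD, hCDg⟩ := hfact' (φ g)
  have key1 : p₁ (φ g) = Gp.inv a ∧ p₂ (φ g) = c := by
    apply uniq12 _ _ _ _ hA1 hB2 (h1.inv_mem ha1) hc2 hAB hcomp1
    rw [hABg, hφg]
  have key2 : p₂' (φ g) = b ∧ p₁' (φ g) = Gp.inv d := by
    apply uniq21 _ _ _ _ hC2 hD1 hb2 (h1.inv_mem hd1) hCD hcomp2
    rw [hCDg, hclaim]
  rw [hφ (φ g), key1.1, key2.1, Gp.inv_inv', habg]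
end

section
/- Let G = G₁G₂ = G₂G₁ be a matched pair of subgroupoids with maps θ(x,y) = (x·p₁(p₂(x)⁻¹y), p₂(x)⁻¹y) defined on {(x,y) : m(x) = r(y)}. Then θ is a bijection from {(x,y) : m(x) = r(y)} onto {(x,y) : s(x) = m(y)}, with inverse θ⁻¹(g,g') = (g·p₁(g')⁻¹, p₂(g·p₁(g')⁻¹)·g'). -/
/-- `θ` is a bijection from `{(x,y) : m(x) = r(y)}` onto `{(x,y) : s(x) = m(y)}`,
with the stated inverse. Here `m = s ∘ p₁`. -/
theorem stmt8 {G : Type*} (Gp : PreGroupoid G) (G₁ G₂ : Set G)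
    (h1 : Gp.IsSubgroupoid G₁) (h2 : Gp.IsSubgroupoid G₂)
    (hinter : G₁ ∩ G₂ = Gp.units)
    (p₁ p₂ : G → G)
    (hfact : Gp.IsFactorization G₁ G₂ p₁ p₂)
    (θ θinv : G × G → G × G)
    (hθ : ∀ p, θ p = (Gp.mul p.1 (p₁ (Gp.mul (Gp.inv (p₂ p.1)) p.2)),
                      Gp.mul (Gp.inv (p₂ p.1)) p.2))
    (hθinv : ∀ p, θinv p = (Gp.mul p.1 (Gp.inv (p₁ p.2)),
                            Gp.mul (p₂ (Gp.mul p.1 (Gp.inv (p₁ p.2)))) p.2)) :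
    (∀ x y, Gp.s (p₁ x) = Gp.r y → Gp.s (θ (x, y)).1 = Gp.s (p₁ (θ (x, y)).2)) ∧
    (∀ x y, Gp.s x = Gp.s (p₁ y) → Gp.s (p₁ (θinv (x, y)).1) = Gp.r (θinv (x, y)).2) ∧
    (∀ x y, Gp.s (p₁ x) = Gp.r y → θinv (θ (x, y)) = (x, y)) ∧
    (∀ x y, Gp.s x = Gp.s (p₁ y) → θ (θinv (x, y)) = (x, y)) := by
  have hspr : ∀ g, Gp.s (p₁ g) = Gp.r (p₂ g) := fun g => (hfact g).2.2.1
  have hmul : ∀ g, Gp.mul (p₁ g) (p₂ g) = g := fun g => (hfact g).2.2.2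
  have hr1 : ∀ g, Gp.r (p₁ g) = Gp.r g := fun g => by
    have := Gp.r_mul (p₁ g) (p₂ g) (hspr g); rw [hmul g] at this; exact this.symm
  have hs2 : ∀ g, Gp.s (p₂ g) = Gp.s g := fun g => by
    have := Gp.s_mul (p₁ g) (p₂ g) (hspr g); rw [hmul g] at this; exact this.symm
  simp only [hθ, hθinv]
  refine ⟨?_, ?_, ?_, ?_⟩
  · intro x y h
    have hzc : Gp.s (Gp.inv (p₂ x)) = Gp.r y := by rw [Gp.s_inv, ← hspr, h]
    have hrz : Gp.r (Gp.mul (Gp.inv (p₂ x)) y) = Gp.s x := by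
      rw [Gp.r_mul _ _ hzc, Gp.r_inv, hs2]
    exact Gp.s_mul _ _ (by rw [hr1, hrz])
  · intro x y h
    have hc : Gp.s x = Gp.r (Gp.inv (p₁ y)) := by rw [Gp.r_inv]; exact h
    have hsa : Gp.s (Gp.mul x (Gp.inv (p₁ y))) = Gp.r y := by
      rw [Gp.s_mul _ _ hc, Gp.s_inv, hr1]
    rw [Gp.r_mul _ _ (by rw [hs2]; exact hsa), ← hspr]
  · intro x y h
    set z := Gp.mul (Gp.inv (p₂ x)) y with hzdef
    have hzc : Gp.s (Gp.inv (p₂ x)) = Gp.r y := by rw [Gp.s_inv, ← hspr, h]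
    have hrz : Gp.r z = Gp.s x := by rw [hzdef, Gp.r_mul _ _ hzc, Gp.r_inv, hs2]
    have hux : Gp.s x = Gp.r (p₁ z) := by rw [hr1, hrz]
    have h1 : Gp.mul (Gp.mul x (p₁ z)) (Gp.inv (p₁ z)) = x := by
      rw [Gp.mul_assoc' x (p₁ z) (Gp.inv (p₁ z)) hux (by rw [Gp.r_inv]),
        Gp.mul_inv, ← hux, Gp.id_right]
    rw [h1]
    simp only [Prod.mk.injEq]
    refine ⟨trivial, ?_⟩
    rw [hzdef, ← Gp.mul_assoc' (p₂ x) (Gp.inv (p₂ x)) y (by rw [Gp.r_inv]) hzc,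
      Gp.mul_inv, ← hspr, h, Gp.id_left]
  · intro x y h
    set a := Gp.mul x (Gp.inv (p₁ y)) with hadef
    have hc : Gp.s x = Gp.r (Gp.inv (p₁ y)) := by rw [Gp.r_inv]; exact h
    have hsa : Gp.s a = Gp.r y := by rw [hadef, Gp.s_mul _ _ hc, Gp.s_inv, hr1]
    have hby : Gp.mul (Gp.inv (p₂ a)) (Gp.mul (p₂ a) y) = y := by
      rw [← Gp.mul_assoc' (Gp.inv (p₂ a)) (p₂ a) y (by rw [Gp.s_inv]) (by rw [hs2]; exact hsa),
        Gp.inv_mul, hs2, hsa, Gp.id_left]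
    rw [hby]
    simp only [Prod.mk.injEq]
    refine ⟨?_, trivial⟩
    rw [hadef, Gp.mul_assoc' x (Gp.inv (p₁ y)) (p₁ y) hc (by rw [Gp.s_inv]),
      Gp.inv_mul, ← h, Gp.id_right]
end

section
/- Let G = G₁G₂ be a matched pair of subgroupoids with factorization maps p₁, p₂ and middle map m = s∘p₁ = r∘p₂. Define, for functions f on G₂ and composable pairs (g₂, g₁) ∈ G₂ × G₁ with s(g₂) = r(g₁), 𝔞(f)(g₂,g₁) = f(p₂(g₂g₁)). Then 𝔞 satisfies the action coassociativity: for all (g₂, g₁, h₁) with s(g₂) = r(g₁), s(g₁) = r(h₁), f(p₂(p₂(g₂g₁)h₁)) = f(p₂(g₂g₁h₁)); equivalently p₂(p₂(g₂g₁)h₁) = p₂(g₂g₁h₁). -/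
theorem uniq_of_inter {G : Type*} (Gp : PreGroupoid G) (G₁ G₂ : Set G)
    (h1 : Gp.IsSubgroupoid G₁) (h2 : Gp.IsSubgroupoid G₂)
    (hinter : G₁ ∩ G₂ = Gp.units) :
    Gp.UniqueFactorization G₁ G₂ := by
  intro g₁ g₂ h₁ h₂ mg₁ mg₂ mh₁ mh₂ cg ch hmul
  set u := Gp.mul (Gp.inv h₁) g₁ with hu
  have hrg : Gp.r g₁ = Gp.r h₁ := by
    rw [← Gp.r_mul g₁ g₂ cg, hmul, Gp.r_mul h₁ h₂ ch]
  have hsg : Gp.s g₂ = Gp.s h₂ := by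
    rw [← Gp.s_mul g₁ g₂ cg, hmul, Gp.s_mul h₁ h₂ ch]
  have cih : Gp.s (Gp.inv h₁) = Gp.r g₁ := by rw [Gp.s_inv, hrg]
  have hu1 : u ∈ G₁ := h1.mul_mem (h1.inv_mem mh₁) mg₁ cih
  have hsu : Gp.s u = Gp.s g₁ := Gp.s_mul _ _ cih
  -- u g₂ = h₂
  have key : Gp.mul u g₂ = h₂ := by
    have e1 : Gp.mul (Gp.inv h₁) (Gp.mul g₁ g₂) = Gp.mul u g₂ :=
      (Gp.mul_assoc' (Gp.inv h₁) g₁ g₂ cih cg).symm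
    have e2 : Gp.mul (Gp.inv h₁) (Gp.mul h₁ h₂) = h₂ := by
      rw [← Gp.mul_assoc' _ _ _ (by rw [Gp.s_inv]) ch, Gp.inv_mul, ch, Gp.id_left]
    rw [← e1, hmul, e2]
  -- u = h₂ g₂⁻¹ ∈ G₂
  have hu2' : u = Gp.mul h₂ (Gp.inv g₂) := by
    have c1 : Gp.s u = Gp.r g₂ := by rw [hsu, cg]
    have e3 : Gp.mul (Gp.mul u g₂) (Gp.inv g₂) = u := by
      rw [Gp.mul_assoc' _ _ _ c1 (by rw [Gp.r_inv]), Gp.mul_inv, ← c1, Gp.id_right]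
    rw [key] at e3
    exact e3.symm
  have hu2 : u ∈ G₂ := hu2' ▸ h2.mul_mem mh₂ (h2.inv_mem mg₂)
    (by rw [Gp.r_inv, ← hsg])
  have huu : u ∈ Gp.units := by rw [← hinter]; exact ⟨hu1, hu2⟩
  obtain ⟨w, hw⟩ := huu
  have hueq : Gp.s u = u := by rw [← hw, Gp.s_s]
  have hru : Gp.r u = u := by rw [← hw, Gp.r_s]
  -- s h₁ = r u
  have hshu : Gp.s h₁ = Gp.r u := by
    have : Gp.r (Gp.mul h₂ (Gp.inv g₂)) = Gp.r h₂ :=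
      Gp.r_mul h₂ (Gp.inv g₂) (by rw [Gp.r_inv, ← hsg])
    rw [hu2', this, ch]
  have hsh1 : Gp.s h₁ = u := hshu.trans hru
  have hg1h1 : g₁ = h₁ := by
    have e4 : Gp.mul h₁ u = g₁ := by
      show Gp.mul h₁ (Gp.mul (Gp.inv h₁) g₁) = g₁
      rw [← Gp.mul_assoc' _ _ _ (by rw [Gp.r_inv]) cih, Gp.mul_inv, ← hrg, Gp.id_left]
    calc g₁ = Gp.mul h₁ u := e4.symm
      _ = Gp.mul h₁ (Gp.s h₁) := by rw [hsh1]
      _ = h₁ := Gp.id_right h₁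
  refine ⟨hg1h1, ?_⟩
  have hurg2 : u = Gp.r g₂ := by rw [← hueq, hsu, cg]
  calc g₂ = Gp.mul (Gp.r g₂) g₂ := (Gp.id_left g₂).symm
    _ = Gp.mul u g₂ := by rw [← hurg2]
    _ = h₂ := key

/-- coassociativity of the action: f(p2(p2(g2 g1) h1)) = f(p2(g2 g1 h1)),
equivalently p2(p2(g2 g1) h1) = p2(g2 g1 h1). -/
theorem stmt14 {G : Type*} (Gp : PreGroupoid G) (G₁ G₂ : Set G)
    (h1 : Gp.IsSubgroupoid G₁) (h2 : Gp.IsSubgroupoid G₂)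
    (hinter : G₁ ∩ G₂ = Gp.units)
    (p₁ p₂ : G → G)
    (hfact : Gp.IsFactorization G₁ G₂ p₁ p₂) :
    ∀ g₂ g₁ h₁, g₂ ∈ G₂ → g₁ ∈ G₁ → h₁ ∈ G₁ →
      Gp.s g₂ = Gp.r g₁ → Gp.s g₁ = Gp.r h₁ →
      (∀ f : G → ℂ, f (p₂ (Gp.mul (p₂ (Gp.mul g₂ g₁)) h₁)) =
        f (p₂ (Gp.mul (Gp.mul g₂ g₁) h₁))) ∧
      p₂ (Gp.mul (p₂ (Gp.mul g₂ g₁)) h₁) = p₂ (Gp.mul (Gp.mul g₂ g₁) h₁) := by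
  intro g₂ g₁ h₁ mg₂ mg₁ mh₁ c1 c2
  have uniq := uniq_of_inter Gp G₁ G₂ h1 h2 hinter
  set x := Gp.mul g₂ g₁ with hx
  obtain ⟨ma, mb, cab, hab⟩ := hfact x
  set a := p₁ x
  set b := p₂ x
  have hsx : Gp.s x = Gp.r h₁ := by rw [hx, Gp.s_mul _ _ c1, c2]
  have hsb : Gp.s b = Gp.r h₁ := by rw [← hsx, ← hab, Gp.s_mul _ _ cab]
  set y := Gp.mul b h₁ with hy
  obtain ⟨mc, md, ccd, hcd⟩ := hfact y
  set c := p₁ y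
  set d := p₂ y
  have hry : Gp.r y = Gp.r b := Gp.r_mul _ _ hsb
  have hsac : Gp.s a = Gp.r c := by
    rw [show Gp.r c = Gp.r y by rw [← hcd, Gp.r_mul _ _ ccd], hry, cab]
  -- x h₁ = (a c) d
  have hfac : Gp.mul x h₁ = Gp.mul (Gp.mul a c) d := by
    rw [Gp.mul_assoc' a c d hsac ccd, hcd, hy, ← Gp.mul_assoc' a b h₁ cab hsb, hab]
  obtain ⟨mA, mB, cAB, hAB⟩ := hfact (Gp.mul x h₁)
  have mac : Gp.mul a c ∈ G₁ := h1.mul_mem ma mc hsac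
  have cacd : Gp.s (Gp.mul a c) = Gp.r d := by rw [Gp.s_mul _ _ hsac, ccd]
  have := uniq (Gp.mul a c) d (p₁ (Gp.mul x h₁)) (p₂ (Gp.mul x h₁))
    mac md mA mB cacd cAB (by rw [hAB, ← hfac])
  exact ⟨fun f => congrArg f this.2, this.2⟩
end
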